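/- Let (X,T) be a distal minimal topological dynamical system, let d ≥ 1 be an integer, and let π : (X,T) → (Z,S) be the factor map onto the maximal (d−1)-step pro-nilfactor of X. Then Q^{[d]}(X) = (π^{[d]})^{-1}(Q^{[d]}(Z)), where Q^{[d]}(Z) is the dynamical parallelepiped of the system (Z,S). -/

import Mathlib

open Set

/-- The group of self-homeomorphisms of a topological space,
with `(f * g) x = f (g x)`. -/
instance homeomorphGroup {X : Type*} [TopologicalSpace X] : Group (X ≃ₜ X) where
  mul f g := g.trans f
  one := Homeomorph.refl X
  inv := Homeomorph.symm
  mul_assoc f g h := rfl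
  one_mul f := by ext x; rfl
  mul_one f := by ext x; rfl
  inv_mul_cancel f := by ext x; exact f.symm_apply_apply x

/-- `n · ε = n₁ε₁ + ⋯ + n_dε_d`. -/
def nDot {d : ℕ} (n : Fin d → ℤ) (ε : Fin d → Bool) : ℤ :=
  ∑ i, if ε i then n i else 0

/-- The vertex `(0,…,0)` of the cube `{0,1}^d`. -/
def v0 (d : ℕ) : Fin d → Bool := fun _ => false

/-- A topological dynamical system `(X,T)` is minimal if every orbit is dense. -/
def IsMinimalTDS {X : Type*} [TopologicalSpace X] (T : X ≃ₜ X) : Prop :=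
  ∀ x : X, Dense (Set.range fun n : ℤ => (T ^ n) x)

/-- The dynamical parallelepiped `Q^{[d]}(X)`: the closure in `X^{[d]} = X^({0,1}^d)`
of the set of points `(T^{n·ε} x)_{ε ∈ {0,1}^d}`, `x ∈ X`, `n ∈ ℤ^d`. -/
def cubeQ {X : Type*} [TopologicalSpace X] (T : X ≃ₜ X) (d : ℕ) :
    Set ((Fin d → Bool) → X) :=
  closure {y | ∃ (x : X) (n : Fin d → ℤ), y = fun ε => (T ^ nDot n ε) x}

/-- The regionally proximal relation of order `k` (for `k = 0` this is all of `X × X`). -/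
def RP {X : Type*} [MetricSpace X] (T : X ≃ₜ X) (k : ℕ) : Set (X × X) :=
  {p | ∀ δ > 0, ∃ (x' y' : X) (n : Fin k → ℤ),
    dist p.1 x' < δ ∧ dist p.2 y' < δ ∧
    ∀ ε : Fin k → Bool, ε ≠ v0 k →
      dist ((T ^ nDot n ε) x') ((T ^ nDot n ε) y') < δ}

/-- A factor map between topological dynamical systems: a continuous surjection
intertwining the actions. -/
def IsFactorMap {X Z : Type*} [TopologicalSpace X] [TopologicalSpace Z]
    (T : X ≃ₜ X) (S : Z ≃ₜ Z) (π : X → Z) : Prop :=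
  Continuous π ∧ Function.Surjective π ∧ ∀ x, π (T x) = S (π x)

/-- The diagonal homeomorphism `T^{[d]} = T × ⋯ × T` of `X^{[d]}`. -/
def diagHomeo {X : Type*} [TopologicalSpace X] (T : X ≃ₜ X) (d : ℕ) :
    ((Fin d → Bool) → X) ≃ₜ ((Fin d → Bool) → X) :=
  Homeomorph.piCongrRight fun _ : Fin d → Bool => T

/-- `w` is a minimal point of the homeomorphism `S`. -/
def IsMinimalPoint {W : Type*} [TopologicalSpace W] (S : W ≃ₜ W) (w : W) : Prop :=
  ∀ y ∈ closure (Set.range fun n : ℤ => (S ^ n) w),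
    closure (Set.range fun n : ℤ => (S ^ n) y)
      = closure (Set.range fun n : ℤ => (S ^ n) w)

/-- The `j`-th face transformation `T_j^{[d]}` of `X^{[d]}`. -/
def faceHomeo {X : Type*} [TopologicalSpace X] {d : ℕ} (T : X ≃ₜ X) (j : Fin d) :
    ((Fin d → Bool) → X) ≃ₜ ((Fin d → Bool) → X) :=
  Homeomorph.piCongrRight fun ε : Fin d → Bool =>
    if ε j then T else Homeomorph.refl X

/-- The face group `F^{[d]}`: the group of homeomorphisms of `X^{[d]}`
generated by the face transformations. -/
def faceGroup {X : Type*} [TopologicalSpace X] (T : X ≃ₜ X) (d : ℕ) :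
    Subgroup (((Fin d → Bool) → X) ≃ₜ ((Fin d → Bool) → X)) :=
  Subgroup.closure (Set.range (faceHomeo (d := d) T))

/-- The orbit of a point under a group of homeomorphisms. -/
def groupOrbit {W : Type*} [TopologicalSpace W] (G : Subgroup (W ≃ₜ W)) (w : W) : Set W :=
  {y | ∃ g ∈ G, g w = y}

/-- The homeomorphism `id × T_*^{[d]}` of `X^{[d]}`, fixing the `(0,…,0)`-coordinate
and applying `T` to every other coordinate. -/
def idFaceHomeo {X : Type*} [TopologicalSpace X] (T : X ≃ₜ X) (d : ℕ) :
    ((Fin d → Bool) → X) ≃ₜ ((Fin d → Bool) → X) :=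
  Homeomorph.piCongrRight fun ε : Fin d → Bool =>
    if ε = v0 d then Homeomorph.refl X else T

namespace Stmt4
open Filter Topology
set_option linter.unusedSectionVars false

lemma hpow_add {X : Type*} [TopologicalSpace X] (T : X ≃ₜ X) (a b : ℤ) (x : X) :
    (T ^ (a + b)) x = (T ^ a) ((T ^ b) x) := by rw [zpow_add]; rfl

lemma hpow_zero' {X : Type*} [TopologicalSpace X] (T : X ≃ₜ X) (x : X) :
    (T ^ (0 : ℤ)) x = x := by rw [zpow_zero]; rfl

instance cubeSemigroup (X : Type*) (d : ℕ) : Semigroup ((Fin d → Bool) → X → X) where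
  mul p q := fun ε => p ε ∘ q ε
  mul_assoc _ _ _ := rfl

lemma mmul_apply {X : Type*} {d : ℕ} (p q : (Fin d → Bool) → X → X) (ε : Fin d → Bool) (x : X) :
    (p * q) ε x = p ε (q ε x) := rfl

lemma continuous_mul_right {X : Type*} [TopologicalSpace X] {d : ℕ}
    (r : (Fin d → Bool) → X → X) :
    Continuous fun p : (Fin d → Bool) → X → X => p * r := by
  refine continuous_pi fun ε => continuous_pi fun x => ?_
  exact (continuous_apply (r ε x)).comp (continuous_apply ε)

lemma nDot_add {d : ℕ} (n m : Fin d → ℤ) (ε : Fin d → Bool) :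
    nDot (fun i => n i + m i) ε = nDot n ε + nDot m ε := by
  unfold nDot
  rw [← Finset.sum_add_distrib]
  exact Finset.sum_congr rfl fun i _ => by by_cases h : ε i <;> simp [h]

lemma nDot_falseF {d : ℕ} (n : Fin d → ℤ) : nDot n (fun _ => false) = 0 := by simp [nDot]

lemma nDot_zeroF {d : ℕ} (ε : Fin d → Bool) : nDot (fun _ : Fin d => (0:ℤ)) ε = 0 := by
  simp [nDot]

lemma nDot_snoc {k : ℕ} (n : Fin k → ℤ) (M : ℤ) (ε : Fin (k+1) → Bool) :
    nDot (Fin.snoc n M) ε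
      = nDot n (fun j => ε j.castSucc) + (if ε (Fin.last k) then M else 0) := by
  unfold nDot
  rw [Fin.sum_univ_castSucc]
  simp

lemma nDot_snoc_false {k : ℕ} (n : Fin (k+1) → ℤ) (η : Fin k → Bool) :
    nDot n (Fin.snoc η false) = nDot (fun j => n j.castSucc) η := by
  unfold nDot
  rw [Fin.sum_univ_castSucc]
  simp

lemma eq_snoc {k : ℕ} (ε : Fin (k+1) → Bool) :
    ε = Fin.snoc (fun j => ε j.castSucc) (ε (Fin.last k)) := by
  funext i
  induction i using Fin.lastCases with
  | last => simp
  | cast j => simp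

section Machinery

variable {X : Type*} [MetricSpace X] [CompactSpace X] (T : X ≃ₜ X)

/-- the set of cube configurations -/
def cubeSet (d : ℕ) : Set ((Fin d → Bool) → X) :=
  {y | ∃ (x : X) (n : Fin d → ℤ), y = fun ε => (T ^ nDot n ε) x}

lemma cubeQ_def (d : ℕ) : cubeQ T d = closure (cubeSet T d) := rfl

/-- generators of the Ellis semigroup of the (faces + diagonal) action -/
def genS (d : ℕ) : Set ((Fin d → Bool) → X → X) :=
  {p | ∃ (m : ℤ) (n : Fin d → ℤ), p = fun ε x => (T ^ (m + nDot n ε)) x}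

/-- the Ellis semigroup of the (faces + diagonal) action on `X^{[d]}` -/
def PP (d : ℕ) : Set ((Fin d → Bool) → X → X) := closure (genS T d)

/-- the Ellis semigroup of `(X,T)` -/
def EXs : Set (X → X) := closure {f | ∃ r : ℤ, f = fun x => (T ^ r) x}

/-- coordinatewise action -/
def actP {X : Type*} {d : ℕ} (p : (Fin d → Bool) → X → X) (y : (Fin d → Bool) → X) :
    (Fin d → Bool) → X := fun ε => p ε (y ε)

def idM (X : Type*) (d : ℕ) : (Fin d → Bool) → X → X := fun _ x => x

lemma genS_comp_continuous {d : ℕ} {g} (hg : g ∈ genS T d) (ε : Fin d → Bool) :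
    Continuous (g ε) := by
  obtain ⟨m, n, rfl⟩ := hg; exact (T ^ (m + nDot n ε)).continuous

lemma continuous_mul_left_gen {d : ℕ} {g} (hg : g ∈ genS T d) :
    Continuous fun p : (Fin d → Bool) → X → X => g * p := by
  refine continuous_pi fun ε => continuous_pi fun x => ?_
  exact (genS_comp_continuous T hg ε).comp ((continuous_apply x).comp (continuous_apply ε))

lemma genS_mul {d : ℕ} {p q} (hp : p ∈ genS T d) (hq : q ∈ genS T d) : p * q ∈ genS T d := by
  obtain ⟨m, n, rfl⟩ := hp; obtain ⟨m', n', rfl⟩ := hq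
  refine ⟨m + m', fun i => n i + n' i, ?_⟩
  funext ε x
  show (T ^ (m + nDot n ε)) ((T ^ (m' + nDot n' ε)) x) = _
  rw [← hpow_add, nDot_add]
  have h : m + nDot n ε + (m' + nDot n' ε) = m + m' + (nDot n ε + nDot n' ε) := by ring
  rw [h]

lemma isClosed_PP (d : ℕ) : IsClosed (PP T d) := isClosed_closure

lemma isCompact_PP (d : ℕ) : IsCompact (PP T d) := (isClosed_PP T d).isCompact

lemma PP_mul {d : ℕ} {p q} (hp : p ∈ PP T d) (hq : q ∈ PP T d) : p * q ∈ PP T d := by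
  have h1 : ∀ g ∈ genS T d, ∀ q' ∈ PP T d, g * q' ∈ PP T d := by
    intro g hg q' hq'
    have himg := image_closure_subset_closure_image (s := genS T d)
      (continuous_mul_left_gen T hg) ⟨q', hq', rfl⟩
    exact closure_mono (by rintro _ ⟨r, hr, rfl⟩; exact genS_mul T hg hr) himg
  have himg := image_closure_subset_closure_image (s := genS T d)
    (continuous_mul_right q) ⟨p, hp, rfl⟩
  have hsub : (fun p' => p' * q) '' genS T d ⊆ PP T d := by
    rintro _ ⟨g, hg, rfl⟩; exact h1 g hg q hq
  exact (isClosed_PP T d).closure_subset ((closure_mono hsub) himg)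

lemma PP_comp_mem {d : ℕ} {p} (hp : p ∈ PP T d) (ε : Fin d → Bool) : p ε ∈ EXs T := by
  have himg := image_closure_subset_closure_image (s := genS T d)
    (continuous_apply (A := fun _ : Fin d → Bool => X → X) ε) ⟨p, hp, rfl⟩
  refine closure_mono ?_ himg
  rintro _ ⟨g, ⟨m, n, rfl⟩, rfl⟩
  exact ⟨m + nDot n ε, rfl⟩

lemma EXs_idem_eq_id
    (hdistal : ∀ x y : X, (∀ δ > 0, ∃ n : ℤ, dist ((T ^ n) x) ((T ^ n) y) < δ) → x = y)
    {e : X → X} (he : e ∈ EXs T) (hee : e ∘ e = e) : e = id := by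
  funext x
  have key : ∀ δ > (0:ℝ), ∃ r : ℤ, dist ((T ^ r) x) ((T ^ r) (e x)) < δ := by
    intro δ hδ
    have hU : IsOpen {f : X → X | dist (f x) (e x) < δ/2 ∧ dist (f (e x)) (e x) < δ/2} :=
      IsOpen.inter
        (isOpen_lt ((continuous_apply x).dist continuous_const) continuous_const)
        (isOpen_lt ((continuous_apply (e x)).dist continuous_const) continuous_const)
    have heU : e ∈ {f : X → X | dist (f x) (e x) < δ/2 ∧ dist (f (e x)) (e x) < δ/2} := by
      constructor
      · simpa using half_pos hδ
      · rw [show e (e x) = e x from congrFun hee x]; simpa using half_pos hδ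
    obtain ⟨f, hfU, hfgen⟩ := _root_.mem_closure_iff.1 he _ hU heU
    obtain ⟨r, rfl⟩ := hfgen
    refine ⟨r, ?_⟩
    calc dist ((T ^ r) x) ((T ^ r) (e x))
        ≤ dist ((T ^ r) x) (e x) + dist (e x) ((T ^ r) (e x)) := dist_triangle _ _ _
      _ < δ/2 + δ/2 := by
          have h2 := hfU.2
          rw [dist_comm] at h2
          exact add_lt_add hfU.1 h2
      _ = δ := add_halves δ
  exact (hdistal x (e x) key).symm

lemma PP_nonempty (d : ℕ) : (PP T d).Nonempty :=
  ⟨_, subset_closure ⟨0, fun _ => 0, rfl⟩⟩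

lemma PP_exists_inv
    (hdistal : ∀ x y : X, (∀ δ > 0, ∃ n : ℤ, dist ((T ^ n) x) ((T ^ n) y) < δ) → x = y)
    {d : ℕ} {p} (hp : p ∈ PP T d) :
    ∃ q ∈ PP T d, q * p = idM X d ∧ p * q = idM X d := by
  have key : ∀ p' ∈ PP T d, ∃ q ∈ PP T d, q * p' = idM X d := by
    intro p' hp'
    obtain ⟨e, ⟨⟨q, hq, rfl⟩, he⟩⟩ := exists_idempotent_in_compact_subsemigroup
      (fun r => continuous_mul_right r) ((· * p') '' PP T d)
      ((PP_nonempty T d).image _)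
      ((isCompact_PP T d).image (continuous_mul_right p'))
      (by
        rintro _ ⟨a, ha, rfl⟩ _ ⟨b, hb, rfl⟩
        exact ⟨a * (p' * b), PP_mul T ha (PP_mul T hp' hb), rfl⟩)
    refine ⟨q, hq, ?_⟩
    have heP : q * p' ∈ PP T d := PP_mul T hq hp'
    have hid : q * p' = idM X d := by
      funext ε
      have hcomp : (q * p') ε ∘ (q * p') ε = (q * p') ε := congrFun he ε
      exact EXs_idem_eq_id T hdistal (PP_comp_mem T heP ε) hcomp
    exact hid
  obtain ⟨q, hq, hqp⟩ := key p hp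
  obtain ⟨r, hr, hrq⟩ := key q hq
  have h1 : r * (q * p) = r := by rw [hqp]; funext ε x; rfl
  have h2 : r * (q * p) = p := by rw [← mul_assoc, hrq]; funext ε x; rfl
  have hpr : p = r := h2.symm.trans h1
  exact ⟨q, hq, hqp, by rw [hpr]; exact hrq⟩

lemma continuous_actP {X : Type*} [TopologicalSpace X] {d : ℕ} (y : (Fin d → Bool) → X) :
    Continuous fun p : (Fin d → Bool) → X → X => actP p y :=
  continuous_pi fun ε => (continuous_apply (y ε)).comp (continuous_apply ε)

lemma actP_gen_cubeSet {d : ℕ} {g} (hg : g ∈ genS T d) {y} (hy : y ∈ cubeSet T d) :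
    actP g y ∈ cubeSet T d := by
  obtain ⟨m, n, rfl⟩ := hg; obtain ⟨x, w, rfl⟩ := hy
  refine ⟨(T ^ m) x, fun i => n i + w i, ?_⟩
  funext ε
  show (T ^ (m + nDot n ε)) ((T ^ nDot w ε) x) = (T ^ nDot (fun i => n i + w i) ε) ((T ^ m) x)
  rw [← hpow_add, ← hpow_add, nDot_add,
    show m + nDot n ε + nDot w ε = nDot n ε + nDot w ε + m by ring]

lemma actP_gen_Q {d : ℕ} {g} (hg : g ∈ genS T d) {y} (hy : y ∈ cubeQ T d) :
    actP g y ∈ cubeQ T d := by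
  have hc : Continuous fun y' : (Fin d → Bool) → X => actP g y' :=
    continuous_pi fun ε => (genS_comp_continuous T hg ε).comp (continuous_apply ε)
  have himg := image_closure_subset_closure_image (s := cubeSet T d) hc ⟨y, hy, rfl⟩
  exact closure_mono (by rintro _ ⟨y', hy', rfl⟩; exact actP_gen_cubeSet T hg hy') himg

lemma actP_PP_Q {d : ℕ} {p} (hp : p ∈ PP T d) {y} (hy : y ∈ cubeQ T d) :
    actP p y ∈ cubeQ T d := by
  have hsub : PP T d ⊆ {p' | actP p' y ∈ cubeQ T d} :=
    closure_minimal (fun g hg => actP_gen_Q T hg hy)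
      (IsClosed.preimage (continuous_actP y) isClosed_closure)
  exact hsub hp

lemma diag_mem_cubeQ (d : ℕ) (x : X) : (fun _ : Fin d → Bool => x) ∈ cubeQ T d :=
  subset_closure ⟨x, fun _ => 0, by funext ε; rw [nDot_zeroF, hpow_zero']⟩

lemma cubeQ_eq_orbit (hmin : IsMinimalTDS T) (x0 : X) (d : ℕ) :
    cubeQ T d = (fun p => actP p (fun _ => x0)) '' PP T d := by
  have hSclosed : IsClosed ((fun p => actP p (fun _ : Fin d → Bool => x0)) '' PP T d) :=
    (((isCompact_PP T d).image (continuous_actP _))).isClosed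
  apply Set.Subset.antisymm
  · -- cubeQ ⊆ orbit
    have hdiag : ∀ x : X, (fun _ : Fin d → Bool => x)
        ∈ (fun p => actP p (fun _ : Fin d → Bool => x0)) '' PP T d := by
      intro x
      have hx : x ∈ closure (Set.range fun m : ℤ => (T ^ m) x0) := hmin x0 x
      have hcd : Continuous fun z : X => fun _ : Fin d → Bool => z :=
        continuous_pi fun _ => continuous_id
      have himg := image_closure_subset_closure_image
        (s := Set.range fun m : ℤ => (T ^ m) x0) hcd ⟨x, hx, rfl⟩
      have hsub : (fun z : X => fun _ : Fin d → Bool => z) ''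
          (Set.range fun m : ℤ => (T ^ m) x0) ⊆
          (fun p => actP p (fun _ : Fin d → Bool => x0)) '' PP T d := by
        rintro _ ⟨_, ⟨m, rfl⟩, rfl⟩
        refine ⟨fun ε x => (T ^ (m + nDot (fun _ => (0:ℤ)) ε)) x,
          subset_closure ⟨m, fun _ => 0, rfl⟩, ?_⟩
        funext ε
        show (T ^ (m + nDot (fun _ => (0:ℤ)) ε)) x0 = (T ^ m) x0
        rw [nDot_zeroF, add_zero]
      exact hSclosed.closure_subset ((closure_mono hsub) himg)
    apply closure_minimal ?_ hSclosed
    rintro _ ⟨x, n, rfl⟩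
    obtain ⟨p', hp', hval⟩ := hdiag x
    refine ⟨(fun ε x => (T ^ (0 + nDot n ε)) x) * p',
      PP_mul T (subset_closure ⟨0, n, rfl⟩) hp', ?_⟩
    funext ε
    show (T ^ (0 + nDot n ε)) (p' ε x0) = (T ^ nDot n ε) x
    rw [show p' ε x0 = x from congrFun hval ε, zero_add]
  · -- orbit ⊆ cubeQ
    have himg := image_closure_subset_closure_image (s := genS T d)
      (continuous_actP (fun _ : Fin d → Bool => x0))
    intro yy hyy
    refine closure_mono ?_ (himg hyy)
    rintro _ ⟨g, ⟨m, n, rfl⟩, rfl⟩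
    refine ⟨(T ^ m) x0, n, ?_⟩
    funext ε
    show (T ^ (m + nDot n ε)) x0 = (T ^ nDot n ε) ((T ^ m) x0)
    rw [show m + nDot n ε = nDot n ε + m by ring, hpow_add]

lemma exists_PP_map (hmin : IsMinimalTDS T)
    (hdistal : ∀ x y : X, (∀ δ > 0, ∃ n : ℤ, dist ((T ^ n) x) ((T ^ n) y) < δ) → x = y)
    {d : ℕ} {a b : (Fin d → Bool) → X} (ha : a ∈ cubeQ T d) (hb : b ∈ cubeQ T d) :
    ∃ h ∈ PP T d, actP h a = b := by
  rw [cubeQ_eq_orbit T hmin (a (fun _ => false)) d] at ha hb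
  obtain ⟨p, hp, hpa⟩ := ha
  obtain ⟨p', hp', hpb⟩ := hb
  obtain ⟨q, hq, hqp, -⟩ := PP_exists_inv T hdistal hp
  refine ⟨p' * q, PP_mul T hp' hq, ?_⟩
  funext ε
  have h1 : a ε = p ε (a (fun _ => false)) := (congrFun hpa ε).symm
  have h2 : b ε = p' ε (a (fun _ => false)) := (congrFun hpb ε).symm
  show (p' * q) ε (a ε) = b ε
  rw [mmul_apply, h1, h2]
  congr 1
  exact congrFun (congrFun hqp ε) _

lemma faceProj_mem {k : ℕ} {y : (Fin (k+1) → Bool) → X} (hy : y ∈ cubeQ T (k+1)) :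
    (fun η : Fin k → Bool => y (Fin.snoc η false)) ∈ cubeQ T k := by
  have hc : Continuous fun y' : (Fin (k+1) → Bool) → X =>
      fun η : Fin k → Bool => y' (Fin.snoc η false) :=
    continuous_pi fun η => continuous_apply _
  have himg := image_closure_subset_closure_image (s := cubeSet T (k+1)) hc ⟨y, hy, rfl⟩
  refine closure_mono ?_ himg
  rintro _ ⟨y', ⟨x, n, rfl⟩, rfl⟩
  refine ⟨x, fun j => n j.castSucc, ?_⟩
  funext η
  show (T ^ nDot n (Fin.snoc η false)) x = _
  rw [nDot_snoc_false]

lemma pe {Z : Type*} [MetricSpace Z] [CompactSpace Z] (S : Z ≃ₜ Z) (π : X → Z)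
    (hfac : ∀ x, π (T x) = S (π x)) : ∀ (r : ℤ) (x : X), π ((T ^ r) x) = (S ^ r) (π x) := by
  have hneg : ∀ x, π (T.symm x) = S.symm (π x) := by
    intro x
    have h := hfac (T.symm x)
    rw [T.apply_symm_apply] at h
    calc π (T.symm x) = S.symm (S (π (T.symm x))) := (S.symm_apply_apply _).symm
      _ = S.symm (π x) := by rw [← h]
  intro r
  induction r using Int.induction_on with
  | zero => intro x; rw [hpow_zero', hpow_zero']
  | succ i ih =>
    intro x
    have h1 : ((i : ℤ) + 1) = (1 : ℤ) + (i : ℤ) := by ring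
    rw [h1, hpow_add, hpow_add, ← ih x]
    have h2 : ∀ z : X, (T ^ (1:ℤ)) z = T z := fun z => by rw [zpow_one]
    have h3 : ∀ z : Z, (S ^ (1:ℤ)) z = S z := fun z => by rw [zpow_one]
    rw [h2, h3]
    exact hfac _
  | pred i ih =>
    intro x
    have h1 : (-(i : ℤ) - 1) = (-1 : ℤ) + (-(i : ℤ)) := by ring
    rw [h1, hpow_add, hpow_add, ← ih x]
    have h2 : ∀ z : X, (T ^ (-1:ℤ)) z = T.symm z := fun z => by rw [zpow_neg_one]; rfl
    have h3 : ∀ z : Z, (S ^ (-1:ℤ)) z = S.symm z := fun z => by rw [zpow_neg_one]; rfl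
    rw [h2, h3]
    exact hneg _

lemma exists_shadow {Z : Type*} [MetricSpace Z] [CompactSpace Z] (S : Z ≃ₜ Z) (π : X → Z)
    (hcont : Continuous π) (hfac : ∀ x, π (T x) = S (π x))
    {e : X → X} (he : e ∈ EXs T) :
    ∃ f : Z → Z, ∀ x, π (e x) = f (π x) := by
  have hJcomp : IsCompact (closure {gf : (X → X) × (Z → Z) |
      ∃ r : ℤ, gf = (fun x => (T ^ r) x, fun z => (S ^ r) z)}) :=
    isClosed_closure.isCompact
  have hproj : EXs T ⊆ Prod.fst '' closure {gf : (X → X) × (Z → Z) |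
      ∃ r : ℤ, gf = (fun x => (T ^ r) x, fun z => (S ^ r) z)} := by
    apply closure_minimal ?_ (hJcomp.image continuous_fst).isClosed
    rintro _ ⟨r, rfl⟩
    exact ⟨_, subset_closure ⟨r, rfl⟩, rfl⟩
  obtain ⟨gf, hgf, h1⟩ := hproj he
  refine ⟨gf.2, ?_⟩
  have hK : closure {gf : (X → X) × (Z → Z) |
      ∃ r : ℤ, gf = (fun x => (T ^ r) x, fun z => (S ^ r) z)} ⊆
      {gf : (X → X) × (Z → Z) | ∀ x, π (gf.1 x) = gf.2 (π x)} := by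
    apply closure_minimal
    · rintro _ ⟨r, rfl⟩ x
      exact pe T S π hfac r x
    · have hEq : {gf : (X → X) × (Z → Z) | ∀ x, π (gf.1 x) = gf.2 (π x)} =
          ⋂ x : X, {gf : (X → X) × (Z → Z) | π (gf.1 x) = gf.2 (π x)} := by
        ext gf; simp
      rw [hEq]
      exact isClosed_iInter fun x => isClosed_eq
        (hcont.comp ((continuous_apply x).comp continuous_fst))
        ((continuous_apply (π x)).comp continuous_snd)
  intro x
  rw [← h1]
  exact hK hgf x

lemma tendsto_of_dist_lt {x : X} {xs : ℕ → X}
    (h : ∀ i : ℕ, dist x (xs i) < 1 / (i + 1)) : Tendsto xs atTop (𝓝 x) := by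
  rw [Metric.tendsto_atTop]
  intro δ hδ
  obtain ⟨N, hN⟩ := exists_nat_one_div_lt hδ
  refine ⟨N, fun n hn => ?_⟩
  have hle : (1 : ℝ) / (n + 1) ≤ 1 / (N + 1) := by
    apply one_div_le_one_div_of_le
    · positivity
    · exact_mod_cast by omega
  calc dist (xs n) x = dist x (xs n) := dist_comm _ _
    _ < 1 / (n + 1) := h n
    _ ≤ 1 / (N + 1) := hle
    _ < δ := hN

/-- Lemma A : if `(x,y) ∈ RP^{[k]}` then the cube with `y` at position `(0,…,0,1)`
and `x` everywhere else lies in `Q^{[k+1]}`. -/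
lemma lemA (hmin : IsMinimalTDS T)
    (hdistal : ∀ x y : X, (∀ δ > 0, ∃ n : ℤ, dist ((T ^ n) x) ((T ^ n) y) < δ) → x = y)
    (k : ℕ) (x y : X) (hxy : (x, y) ∈ RP T k) :
    (fun ε : Fin (k+1) → Bool =>
        if ε = Fin.snoc (fun _ => false) true then y else x) ∈ cubeQ T (k+1) := by
  -- step 1 : witnesses
  have H : ∀ i : ℕ, ∃ (x' y' : X) (n : Fin k → ℤ),
      dist x x' < 1/(i+1) ∧ dist y y' < 1/(i+1) ∧
      ∀ ε : Fin k → Bool, ε ≠ v0 k →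
        dist ((T ^ nDot n ε) x') ((T ^ nDot n ε) y') < 1/(i+1) := by
    intro i
    exact hxy (1/(i+1)) (by positivity)
  choose xs ys ns h1 h2 h3 using H
  -- step 2 : the auxiliary points `u i` lie in `Q^{[k+1]}`
  set u : ℕ → (Fin (k+1) → Bool) → X := fun i ε =>
    (T ^ nDot (ns i) fun j => ε j.castSucc)
      (if ε (Fin.last k) then ys i else xs i) with hu_def
  have huQ : ∀ i, u i ∈ cubeQ T (k+1) := by
    intro i
    have hφc : Continuous fun z : X => fun ε : Fin (k+1) → Bool =>
        (T ^ nDot (ns i) fun j => ε j.castSucc)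
          (if ε (Fin.last k) then z else xs i) := by
      refine continuous_pi fun ε => ?_
      cases hb : ε (Fin.last k)
      · simpa [hb] using (continuous_const :
          Continuous fun _ : X => (T ^ nDot (ns i) fun j => ε j.castSucc) (xs i))
      · simpa [hb] using (T ^ nDot (ns i) fun j => ε j.castSucc).continuous
    have himg : (fun z : X => fun ε : Fin (k+1) → Bool =>
        (T ^ nDot (ns i) fun j => ε j.castSucc)
          (if ε (Fin.last k) then z else xs i)) ''
        Set.range (fun M : ℤ => (T ^ M) (xs i)) ⊆ cubeSet T (k+1) := by
      rintro _ ⟨_, ⟨M, rfl⟩, rfl⟩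
      refine ⟨xs i, Fin.snoc (ns i) M, ?_⟩
      funext ε
      show (T ^ nDot (ns i) fun j => ε j.castSucc)
          (if ε (Fin.last k) then (T ^ M) (xs i) else xs i)
          = (T ^ nDot (Fin.snoc (ns i) M) ε) (xs i)
      rw [nDot_snoc]
      cases hb : ε (Fin.last k)
      · simp [hb]
      · simp only [hb, if_true]
        rw [hpow_add]
    have hy' : ys i ∈ closure (Set.range fun M : ℤ => (T ^ M) (xs i)) :=
      hmin (xs i) (ys i)
    have hmem := image_closure_subset_closure_image
      (s := Set.range fun M : ℤ => (T ^ M) (xs i)) hφc ⟨ys i, hy', rfl⟩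
    exact closure_mono himg hmem
  -- step 3 : a convergent subsequence
  obtain ⟨ul, -, ψ, hψ, hconv⟩ := isCompact_univ.tendsto_subseq
    (x := u) (fun i => mem_univ (u i))
  have hulQ : ul ∈ cubeQ T (k+1) :=
    isClosed_closure.mem_of_tendsto hconv (Eventually.of_forall fun i => huQ (ψ i))
  have hcoord : ∀ ε : Fin (k+1) → Bool,
      Tendsto (fun i => u (ψ i) ε) atTop (𝓝 (ul ε)) :=
    fun ε => ((continuous_apply ε).tendsto ul).comp hconv
  have hxs : Tendsto (fun i => xs (ψ i)) atTop (𝓝 x) :=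
    (tendsto_of_dist_lt h1).comp hψ.tendsto_atTop
  have hys : Tendsto (fun i => ys (ψ i)) atTop (𝓝 y) :=
    (tendsto_of_dist_lt h2).comp hψ.tendsto_atTop
  -- coordinate values of `u i`
  have hval_f : ∀ i (η : Fin k → Bool),
      u i (Fin.snoc η false) = (T ^ nDot (ns i) η) (xs i) := by
    intro i η
    show (T ^ nDot (ns i) fun j => (Fin.snoc η false : Fin (k+1) → Bool) j.castSucc)
        (if (Fin.snoc η false : Fin (k+1) → Bool) (Fin.last k) then ys i else xs i) = _
    simp
  have hval_t : ∀ i (η : Fin k → Bool),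
      u i (Fin.snoc η true) = (T ^ nDot (ns i) η) (ys i) := by
    intro i η
    show (T ^ nDot (ns i) fun j => (Fin.snoc η true : Fin (k+1) → Bool) j.castSucc)
        (if (Fin.snoc η true : Fin (k+1) → Bool) (Fin.last k) then ys i else xs i) = _
    simp
  -- base coordinates
  have hbase_f : ul (Fin.snoc (fun _ => false) false) = x := by
    refine tendsto_nhds_unique (hcoord _) ?_
    have heq : ∀ i, u (ψ i) (Fin.snoc (fun _ => false) false) = xs (ψ i) := by
      intro i
      rw [hval_f, nDot_falseF, hpow_zero']
    simpa only [heq] using hxs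
  have hbase_t : ul (Fin.snoc (fun _ => false) true) = y := by
    refine tendsto_nhds_unique (hcoord _) ?_
    have heq : ∀ i, u (ψ i) (Fin.snoc (fun _ => false) true) = ys (ψ i) := by
      intro i
      rw [hval_t, nDot_falseF, hpow_zero']
    simpa only [heq] using hys
  -- gluing of the two faces away from the base
  have hglue : ∀ η : Fin k → Bool, η ≠ v0 k →
      ul (Fin.snoc η true) = ul (Fin.snoc η false) := by
    intro η hη
    have hd : Tendsto (fun i => dist (u (ψ i) (Fin.snoc η true))
        (u (ψ i) (Fin.snoc η false))) atTop
        (𝓝 (dist (ul (Fin.snoc η true)) (ul (Fin.snoc η false)))) :=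
      (hcoord _).dist (hcoord _)
    have hzero : Tendsto (fun i => dist (u (ψ i) (Fin.snoc η true))
        (u (ψ i) (Fin.snoc η false))) atTop (𝓝 0) := by
      apply squeeze_zero (fun i => dist_nonneg) (g := fun i : ℕ => (1:ℝ)/(i+1))
        ?_ tendsto_one_div_add_atTop_nhds_zero_nat
      intro i
      show dist (u (ψ i) (Fin.snoc η true)) (u (ψ i) (Fin.snoc η false)) ≤ (1:ℝ)/(i+1)
      rw [hval_t, hval_f, dist_comm]
      refine le_of_lt (lt_of_lt_of_le (h3 (ψ i) η hη) ?_)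
      apply one_div_le_one_div_of_le
      · positivity
      · exact_mod_cast by have := hψ.le_apply (x := i); omega
    have := tendsto_nhds_unique hd hzero
    exact dist_eq_zero.mp this
  -- the bottom face
  set a : (Fin k → Bool) → X := fun η => ul (Fin.snoc η false) with ha_def
  have haQ : a ∈ cubeQ T k := faceProj_mem T hulQ
  have hax : a (fun _ => false) = x := hbase_f
  -- drive the bottom face to the constant `x` configuration
  obtain ⟨h, hh, hha⟩ := exists_PP_map T hmin hdistal haQ (diag_mem_cubeQ T k x)
  -- the auxiliary closed set C1
  set C0 : Set (X × ((Fin k → Bool) → X)) :=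
    {w : X × ((Fin k → Bool) → X) | ∃ (m : ℤ) (n : Fin k → ℤ),
      w = ((T ^ m) y, fun η => (T ^ (m + nDot n η)) (a η))} with hC0_def
  have hPhiC1 : ((h (fun _ => false)) y, fun η => h η (a η)) ∈ closure C0 := by
    have hc : Continuous fun p : (Fin k → Bool) → X → X =>
        ((p (fun _ => false)) y, fun η => p η (a η)) :=
      (Continuous.prodMk ((continuous_apply y).comp (continuous_apply _))
        (continuous_pi fun η => (continuous_apply (a η)).comp (continuous_apply η)))
    have himg := image_closure_subset_closure_image (s := genS T k) hc ⟨h, hh, rfl⟩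
    refine closure_mono ?_ himg
    rintro _ ⟨g, ⟨m, n, rfl⟩, rfl⟩
    refine ⟨m, n, ?_⟩
    show ((T ^ (m + nDot n fun _ => false)) y, fun η => (T ^ (m + nDot n η)) (a η)) = _
    rw [nDot_falseF, add_zero]
  have hsnd : (fun η => h η (a η)) = fun _ : Fin k → Bool => x := hha
  rw [hsnd] at hPhiC1
  -- invariance of C1 under the Ellis semigroup of (X,T)
  have hstep : ∀ r : ℤ, ∀ w' ∈ closure C0,
      ((T ^ r) w'.1, fun η => (T ^ r) (w'.2 η)) ∈ closure C0 := by
    intro r w' hw'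
    have hρc : Continuous fun w'' : X × ((Fin k → Bool) → X) =>
        ((T ^ r) w''.1, fun η => (T ^ r) (w''.2 η)) :=
      Continuous.prodMk ((T ^ r).continuous.comp continuous_fst)
        (continuous_pi fun η =>
          (T ^ r).continuous.comp ((continuous_apply η).comp continuous_snd))
    have himg := image_closure_subset_closure_image (s := C0) hρc ⟨w', hw', rfl⟩
    refine closure_mono ?_ himg
    rintro _ ⟨w'', ⟨m, n, rfl⟩, rfl⟩
    refine ⟨r + m, n, ?_⟩
    have hfst : (T ^ (r + m)) y = (T ^ r) ((T ^ m) y) := hpow_add T r m y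
    have hsnd' : ∀ η, (T ^ (r + m + nDot n η)) (a η)
        = (T ^ r) ((T ^ (m + nDot n η)) (a η)) := by
      intro η
      rw [show r + m + nDot n η = r + (m + nDot n η) by ring]
      exact hpow_add T r (m + nDot n η) (a η)
    show ((T ^ r) ((T ^ m) y), fun η => (T ^ r) ((T ^ (m + nDot n η)) (a η)))
      = ((T ^ (r + m)) y, fun η => (T ^ (r + m + nDot n η)) (a η))
    rw [hfst]
    exact congrArg _ (funext fun η => (hsnd' η).symm)
  have hinv : ∀ e ∈ EXs T, ∀ w ∈ closure C0,
      (e w.1, fun η => e (w.2 η)) ∈ closure C0 := by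
    intro e he w hw
    have hθ : Continuous fun f : X → X => (f w.1, fun η => f (w.2 η)) :=
      Continuous.prodMk (continuous_apply w.1)
        (continuous_pi fun η => continuous_apply (w.2 η))
    have himg := image_closure_subset_closure_image
      (s := {f : X → X | ∃ r : ℤ, f = fun x => (T ^ r) x}) hθ ⟨e, he, rfl⟩
    have hsub : (fun f : X → X => (f w.1, fun η => f (w.2 η))) ''
        {f : X → X | ∃ r : ℤ, f = fun x => (T ^ r) x} ⊆ closure C0 := by
      rintro _ ⟨_, ⟨r, rfl⟩, rfl⟩
      exact hstep r w hw
    exact isClosed_closure.closure_subset ((closure_mono hsub) himg)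
  -- the inverse of h
  obtain ⟨q, hq, hqh, -⟩ := PP_exists_inv T hdistal hh
  have hβmem : q (fun _ => false) ∈ EXs T := PP_comp_mem T hq _
  have hβα : ∀ z : X, q (fun _ => false) (h (fun _ => false) z) = z :=
    fun z => congrFun (congrFun hqh (fun _ => false)) z
  have hαx : h (fun _ => false) x = x := by
    have hcx : h (fun _ => false) (a (fun _ => false)) = x := congrFun hha (fun _ => false)
    rwa [hax] at hcx
  have hβx : q (fun _ => false) x = x := by
    conv_lhs => rw [← hαx]
    exact hβα x
  -- (y, const x) belongs to C1
  have hyC1 : ((y : X), fun _ : Fin k → Bool => x) ∈ closure C0 := by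
    have hres := hinv (q (fun _ => false)) hβmem _ hPhiC1
    simpa [hβα y, hβx] using hres
  -- endgame : approximate the target configuration
  have hgoal : (fun ε : Fin (k+1) → Bool =>
      if ε = Fin.snoc (fun _ => false) true then y else x) ∈
      closure (cubeQ T (k+1)) := by
    rw [Metric.mem_closure_iff]
    intro δ hδ
    obtain ⟨wgen, hwgen, hwd⟩ := Metric.mem_closure_iff.mp hyC1 δ hδ
    obtain ⟨m, n, rfl⟩ := hwgen
    have hle1 : dist y ((T ^ m) y) ≤ dist ((y : X), fun _ : Fin k → Bool => x)
        ((T ^ m) y, fun η => (T ^ (m + nDot n η)) (a η)) := by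
      rw [Prod.dist_eq]; exact le_max_left _ _
    have hd1 : dist y ((T ^ m) y) < δ := lt_of_le_of_lt hle1 hwd
    have hd2 : ∀ η, dist x ((T ^ (m + nDot n η)) (a η)) < δ := by
      intro η
      have h' := dist_le_pi_dist (fun _ : Fin k → Bool => x)
        (fun η => (T ^ (m + nDot n η)) (a η)) η
      have hle2 : dist x ((T ^ (m + nDot n η)) (a η)) ≤
          dist ((y : X), fun _ : Fin k → Bool => x)
            ((T ^ m) y, fun η => (T ^ (m + nDot n η)) (a η)) := by
        calc dist x ((T ^ (m + nDot n η)) (a η))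
            ≤ dist (fun _ : Fin k → Bool => x)
              (fun η => (T ^ (m + nDot n η)) (a η)) := h'
          _ ≤ _ := by rw [Prod.dist_eq]; exact le_max_right _ _
      exact lt_of_le_of_lt hle2 hwd
    refine ⟨actP (fun ε x' => (T ^ (m + nDot (Fin.snoc n 0) ε)) x') ul,
      actP_PP_Q T (subset_closure ⟨m, Fin.snoc n 0, rfl⟩) hulQ, ?_⟩
    rw [dist_pi_lt_iff hδ]
    intro ε
    have hnd : nDot (Fin.snoc n 0) ε = nDot n (fun j => ε j.castSucc) := by
      rw [nDot_snoc]
      simp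
    have hact : actP (fun ε x' => (T ^ (m + nDot (Fin.snoc n 0) ε)) x') ul ε
        = (T ^ (m + nDot n (fun j => ε j.castSucc))) (ul ε) := by
      show (T ^ (m + nDot (Fin.snoc n 0) ε)) (ul ε) = _
      rw [hnd]
    rw [hact]
    by_cases hcase : ε = Fin.snoc (fun _ => false) true
    · rw [if_pos hcase]
      have hε1 : (fun j => ε j.castSucc) = fun _ : Fin k => false := by
        funext j; rw [hcase]; simp
      have hε2 : ul ε = y := by rw [hcase]; exact hbase_t
      rw [hε1, hε2, nDot_falseF, add_zero]
      exact hd1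
    · rw [if_neg hcase]
      cases hb : ε (Fin.last k)
      · have hεs : ε = Fin.snoc (fun j => ε j.castSucc) false := by
          conv_lhs => rw [eq_snoc ε]
          rw [hb]
        have hul : ul ε = a (fun j => ε j.castSucc) := by
          conv_lhs => rw [hεs]
        rw [hul]
        exact hd2 _
      · have hεs : ε = Fin.snoc (fun j => ε j.castSucc) true := by
          conv_lhs => rw [eq_snoc ε]
          rw [hb]
        have hη : (fun j => ε j.castSucc) ≠ v0 k := by
          intro hcon
          apply hcase
          rw [hεs, hcon]
          rfl
        have hul : ul ε = a (fun j => ε j.castSucc) := by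
          conv_lhs => rw [hεs]
          exact hglue _ hη
        rw [hul]
        exact hd2 _
  exact isClosed_closure.closure_subset hgoal

/-- reflection of the cube along a set of digits -/
def flipC {X : Type*} {d : ℕ} (χ : Fin d → Bool) (y : (Fin d → Bool) → X) :
    (Fin d → Bool) → X := fun ε => y fun i => xor (ε i) (χ i)

lemma flip_flip {X : Type*} {d : ℕ} (χ : Fin d → Bool) (y : (Fin d → Bool) → X) :
    flipC χ (flipC χ y) = y := by
  funext ε
  show y (fun i => xor (xor (ε i) (χ i)) (χ i)) = y ε
  congr 1
  funext i
  cases χ i <;> cases ε i <;> rfl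

lemma continuous_flip {X : Type*} [TopologicalSpace X] {d : ℕ} (χ : Fin d → Bool) :
    Continuous (flipC (X := X) (d := d) χ) :=
  continuous_pi fun ε => continuous_apply _

lemma flip_cubeSet {d : ℕ} (χ : Fin d → Bool) {y} (hy : y ∈ cubeSet T d) :
    flipC χ y ∈ cubeSet T d := by
  obtain ⟨x, n, rfl⟩ := hy
  refine ⟨(T ^ (∑ i, if χ i then n i else 0)) x, fun i => if χ i then -n i else n i, ?_⟩
  funext ε
  show (T ^ nDot n fun i => xor (ε i) (χ i)) x = _
  rw [← hpow_add]
  have hexp : nDot n (fun i => xor (ε i) (χ i))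
      = nDot (fun i => if χ i then -n i else n i) ε + ∑ i, if χ i then n i else 0 := by
    unfold nDot
    rw [← Finset.sum_add_distrib]
    refine Finset.sum_congr rfl fun i _ => ?_
    cases hχ : χ i <;> cases hε : ε i <;> simp [hχ, hε]
  rw [hexp]

lemma flip_Q {d : ℕ} (χ : Fin d → Bool) {y} (hy : y ∈ cubeQ T d) :
    flipC χ y ∈ cubeQ T d := by
  have himg := image_closure_subset_closure_image (s := cubeSet T d)
    (continuous_flip χ) ⟨y, hy, rfl⟩
  exact closure_mono (by rintro _ ⟨y', hy', rfl⟩; exact flip_cubeSet T χ hy') himg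

lemma flip_update {X : Type*} {d : ℕ} (χ : Fin d → Bool) (y : (Fin d → Bool) → X)
    (τ : Fin d → Bool) (u : X) :
    flipC χ (fun ε => if ε = τ then u else y ε)
      = fun ε => if ε = (fun i => xor (τ i) (χ i)) then u else flipC χ y ε := by
  classical
  funext ε
  show (if (fun i => xor (ε i) (χ i)) = τ then u else y fun i => xor (ε i) (χ i)) = _
  by_cases hcase : ε = fun i => xor (τ i) (χ i)
  · rw [if_pos hcase, if_pos ?_]
    funext i
    rw [show ε i = xor (τ i) (χ i) from congrFun hcase i]
    cases χ i <;> cases τ i <;> rfl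
  · rw [if_neg ?_, if_neg hcase]
    · rfl
    · intro hcon
      apply hcase
      funext i
      have := congrFun hcon i
      cases hχ : χ i <;> cases hτ : τ i <;> cases hε : ε i <;>
        simp [hχ, hτ, hε] at this ⊢

lemma singleChangeStar {Z : Type*} [MetricSpace Z] [CompactSpace Z] (S : Z ≃ₜ Z)
    (hmin : IsMinimalTDS T)
    (hdistal : ∀ x y : X, (∀ δ > 0, ∃ n : ℤ, dist ((T ^ n) x) ((T ^ n) y) < δ) → x = y)
    (k : ℕ) (π : X → Z) (hπc : Continuous π) (hfac : ∀ x, π (T x) = S (π x))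
    (hnil : ∀ x y : X, π x = π y ↔ (x, y) ∈ RP T k)
    {w : (Fin (k+1) → Bool) → X} (hw : w ∈ cubeQ T (k+1))
    (u : X) (hu : π u = π (w (Fin.snoc (fun _ => false) true))) :
    (fun ε => if ε = Fin.snoc (fun _ => false) true then u else w ε) ∈ cubeQ T (k+1) := by
  rw [cubeQ_eq_orbit T hmin u (k+1)] at hw
  obtain ⟨p, hp, hpw⟩ := hw
  obtain ⟨q, hq, hqp, hpq⟩ := PP_exists_inv T hdistal hp
  obtain ⟨f, hf⟩ := exists_shadow T S π hπc hfac
    (PP_comp_mem T hq (Fin.snoc (fun _ => false) true))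
  -- π (q e* u) = π u
  have hqw : q (Fin.snoc (fun _ => false) true) (w (Fin.snoc (fun _ => false) true)) = u := by
    have h1 : w (Fin.snoc (fun _ => false) true)
        = p (Fin.snoc (fun _ => false) true) u := (congrFun hpw _).symm
    rw [h1]
    exact congrFun (congrFun hqp (Fin.snoc (fun _ => false) true)) u
  have hπu' : π u = π (q (Fin.snoc (fun _ => false) true) u) := by
    calc π u = π (q (Fin.snoc (fun _ => false) true) (w (Fin.snoc (fun _ => false) true))) := by
          rw [hqw]
      _ = f (π (w (Fin.snoc (fun _ => false) true))) := hf _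
      _ = f (π u) := by rw [hu]
      _ = π (q (Fin.snoc (fun _ => false) true) u) := (hf u).symm
  have hRP : (u, q (Fin.snoc (fun _ => false) true) u) ∈ RP T k := (hnil _ _).mp hπu'
  have hw0 := lemA T hmin hdistal k u (q (Fin.snoc (fun _ => false) true) u) hRP
  have hfinal := actP_PP_Q T hp hw0
  have heq : actP p (fun ε : Fin (k+1) → Bool =>
      if ε = Fin.snoc (fun _ => false) true then q (Fin.snoc (fun _ => false) true) u else u)
      = fun ε => if ε = Fin.snoc (fun _ => false) true then u else w ε := by
    funext ε
    show p ε (if ε = Fin.snoc (fun _ => false) true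
        then q (Fin.snoc (fun _ => false) true) u else u)
      = if ε = Fin.snoc (fun _ => false) true then u else w ε
    by_cases hcase : ε = Fin.snoc (fun _ => false) true
    · rw [if_pos hcase, if_pos hcase, hcase]
      exact congrFun (congrFun hpq _) u
    · rw [if_neg hcase, if_neg hcase]
      exact congrFun hpw ε
  rwa [heq] at hfinal

lemma singleChange {Z : Type*} [MetricSpace Z] [CompactSpace Z] (S : Z ≃ₜ Z)
    (hmin : IsMinimalTDS T)
    (hdistal : ∀ x y : X, (∀ δ > 0, ∃ n : ℤ, dist ((T ^ n) x) ((T ^ n) y) < δ) → x = y)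
    (k : ℕ) (π : X → Z) (hπc : Continuous π) (hfac : ∀ x, π (T x) = S (π x))
    (hnil : ∀ x y : X, π x = π y ↔ (x, y) ∈ RP T k)
    {w : (Fin (k+1) → Bool) → X} (hw : w ∈ cubeQ T (k+1))
    (η0 : Fin (k+1) → Bool) (u : X) (hu : π u = π (w η0)) :
    (fun ε => if ε = η0 then u else w ε) ∈ cubeQ T (k+1) := by
  set estar : Fin (k+1) → Bool := Fin.snoc (fun _ => false) true with hestar
  set χ : Fin (k+1) → Bool := fun i => xor (η0 i) (estar i) with hχ
  have hkey : (fun i => xor (estar i) (χ i)) = η0 := by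
    funext i
    show xor (estar i) (xor (η0 i) (estar i)) = η0 i
    cases η0 i <;> cases estar i <;> rfl
  have hflipw : flipC χ w ∈ cubeQ T (k+1) := flip_Q T χ hw
  have hwη : flipC χ w estar = w η0 := by
    show w _ = w η0
    rw [hkey]
  have hstar := singleChangeStar T S hmin hdistal k π hπc hfac hnil hflipw u
    (by rw [hwη]; exact hu)
  have hback := flip_Q T χ hstar
  rw [flip_update] at hback
  rw [flip_flip, hkey] at hback
  exact hback

lemma multiChange {Z : Type*} [MetricSpace Z] [CompactSpace Z] (S : Z ≃ₜ Z)
    (hmin : IsMinimalTDS T)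
    (hdistal : ∀ x y : X, (∀ δ > 0, ∃ n : ℤ, dist ((T ^ n) x) ((T ^ n) y) < δ) → x = y)
    (k : ℕ) (π : X → Z) (hπc : Continuous π) (hfac : ∀ x, π (T x) = S (π x))
    (hnil : ∀ x y : X, π x = π y ↔ (x, y) ∈ RP T k)
    {w : (Fin (k+1) → Bool) → X} (hw : w ∈ cubeQ T (k+1))
    (y : (Fin (k+1) → Bool) → X) (hy : ∀ ε, π (y ε) = π (w ε)) :
    y ∈ cubeQ T (k+1) := by
  classical
  have key : ∀ s : Finset (Fin (k+1) → Bool),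
      (fun ε => if ε ∈ s then y ε else w ε) ∈ cubeQ T (k+1) := by
    intro s
    induction s using Finset.induction_on with
    | empty => simpa using hw
    | @insert a s ha ih =>
      have hπa : π (y a) = π ((fun ε => if ε ∈ s then y ε else w ε) a) := by
        show π (y a) = π (if a ∈ s then y a else w a)
        rw [if_neg ha]
        exact hy a
      have hstep := singleChange T S hmin hdistal k π hπc hfac hnil ih a (y a) hπa
      have heq : (fun ε => if ε = a then y a
            else (fun ε => if ε ∈ s then y ε else w ε) ε)
          = fun ε => if ε ∈ insert a s then y ε else w ε := by
        funext ε
        by_cases hε : ε = a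
        · subst hε
          simp [ha]
        · simp [hε, Finset.mem_insert]
      rwa [heq] at hstep
  have := key Finset.univ
  simpa using this

end Machinery
end Stmt4

/-- for a distal minimal system, `Q^{[d]}(X) = (π^{[d]})⁻¹(Q^{[d]}(Z))`,
where `π` is the factor map onto the maximal `(d-1)`-step pro-nilfactor. -/
theorem statement4 {X Z : Type*} [MetricSpace X] [CompactSpace X]
    [MetricSpace Z] [CompactSpace Z]
    (T : X ≃ₜ X) (S : Z ≃ₜ Z) (hmin : IsMinimalTDS T)
    (hdistal : ∀ x y : X, (∀ δ > 0, ∃ n : ℤ, dist ((T ^ n) x) ((T ^ n) y) < δ) → x = y)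
    (d : ℕ) (hd : 1 ≤ d)
    (π : X → Z) (hπ : IsFactorMap T S π)
    (hnil : ∀ x y : X, π x = π y ↔ (x, y) ∈ RP T (d - 1)) :
    cubeQ T d
      = (fun (y : (Fin d → Bool) → X) (ε : Fin d → Bool) => π (y ε)) ⁻¹' cubeQ S d := by
  classical
  obtain ⟨k, rfl⟩ : ∃ k, d = k + 1 := ⟨d - 1, (Nat.succ_pred_eq_of_pos hd).symm⟩
  obtain ⟨hπc, hπs, hfac⟩ := hπ
  have hnil' : ∀ x y : X, π x = π y ↔ (x, y) ∈ RP T k := fun x y => hnil x y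
  cases isEmpty_or_nonempty X with
  | inl hE =>
    ext y
    exact (hE.false (y fun _ => false)).elim
  | inr hne =>
    have hPic : Continuous fun (y : (Fin (k+1) → Bool) → X) (ε : Fin (k+1) → Bool) => π (y ε) :=
      continuous_pi fun ε => hπc.comp (continuous_apply ε)
    apply Set.Subset.antisymm
    · intro y hy
      show (fun ε => π (y ε)) ∈ cubeQ S (k+1)
      have himg := image_closure_subset_closure_image
        (s := Stmt4.cubeSet T (k+1)) hPic ⟨y, hy, rfl⟩
      refine closure_mono ?_ himg
      rintro _ ⟨y', ⟨x, n, rfl⟩, rfl⟩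
      exact ⟨π x, n, by funext ε; exact Stmt4.pe T S π hfac _ x⟩
    · intro y hy
      have hQc : IsCompact (cubeQ T (k+1)) := isClosed_closure.isCompact
      have himgC : IsCompact ((fun (y : (Fin (k+1) → Bool) → X)
          (ε : Fin (k+1) → Bool) => π (y ε)) '' cubeQ T (k+1)) := hQc.image hPic
      have hsub : cubeQ S (k+1) ⊆ (fun (y : (Fin (k+1) → Bool) → X)
          (ε : Fin (k+1) → Bool) => π (y ε)) '' cubeQ T (k+1) := by
        apply closure_minimal ?_ himgC.isClosed
        rintro _ ⟨z, n, rfl⟩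
        obtain ⟨x, rfl⟩ := hπs z
        refine ⟨fun ε => (T ^ nDot n ε) x, subset_closure ⟨x, n, rfl⟩, ?_⟩
        funext ε
        exact Stmt4.pe T S π hfac _ x
      obtain ⟨w, hwQ, hwπ⟩ := hsub hy
      exact Stmt4.multiChange T S hmin hdistal k π hπc hfac hnil' hwQ y
        (fun ε => (congrFun hwπ ε).symm)
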